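/- For a matrix U in SO(N) with n eigenvalues equal to 1 and remaining eigenvalues e^{±iθ_1},...,e^{±iθ_M} (N = n + 2M), the characteristic polynomial Λ_U(e^{iθ}) = (1 - e^{-iθ})^n ∏_{j=1}^M (1 - e^{i(θ_j - θ)})(1 - e^{i(-θ_j - θ)}) satisfies: the n-th derivative with respect to θ evaluated at θ = 0 has absolute value n! · 2^M · ∏_{j=1}^M (1 - cos θ_j). -/

import Mathlib

open Complex Finset

lemma smoothexp_aux (a b : ℂ) :
    ContDiff ℝ (⊤ : ℕ∞) (fun t : ℝ => Complex.exp (a * (t : ℂ) + b)) := by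
  apply ((Complex.contDiff_exp : ContDiff ℂ (⊤ : ℕ∞) Complex.exp).restrict_scalars ℝ).comp
  exact ((contDiff_const (c := a)).mul Complex.ofRealCLM.contDiff).add contDiff_const

lemma powAux {f : ℝ → ℂ} {f' : ℂ} {t : ℝ} :
    ∀ (k : ℕ), HasDerivAt f f' t →
      HasDerivAt (fun t => f t ^ (k + 1)) (((k : ℂ) + 1) * f t ^ k * f') t
  | 0, hf => by simpa using hf
  | (k + 1), hf => by
    have h := (powAux k hf).mul hf
    have e : (fun t => f t ^ (k + 1 + 1)) = (fun t => f t ^ (k + 1)) * f := by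
      funext x; simp [pow_succ]
    rw [e]
    exact h.congr_deriv (by push_cast; ring)

lemma key_lemma (n : ℕ) : ∀ h : ℝ → ℂ, ContDiff ℝ (⊤ : ℕ∞) h →
    iteratedDeriv n (fun t : ℝ => (1 - Complex.exp (-(Complex.I * (t : ℂ)))) ^ n * h t) 0
      = (n.factorial : ℂ) * Complex.I ^ n * h 0 := by
  induction n with
  | zero => intro h hh; simp [iteratedDeriv_zero]
  | succ m ih =>
    intro h hh
    have hd : Differentiable ℝ h := hh.differentiable (by simp)
    have hd' : ContDiff ℝ (⊤ : ℕ∞) (deriv h) := (contDiff_infty_iff_deriv.mp hh).2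
    have hsm : ContDiff ℝ (⊤ : ℕ∞) (fun t : ℝ => Complex.exp (-(Complex.I * (t : ℂ)))) := by
      have := smoothexp_aux (-Complex.I) 0
      simpa [neg_mul] using this
    have hG : ∀ t : ℝ, HasDerivAt (fun t : ℝ => 1 - Complex.exp (-(Complex.I * (t : ℂ))))
        (Complex.I * Complex.exp (-(Complex.I * (t : ℂ)))) t := by
      intro t
      have h1 : HasDerivAt (fun z : ℂ => 1 - Complex.exp (-(Complex.I * z)))
          (Complex.I * Complex.exp (-(Complex.I * (t : ℂ)))) (t : ℂ) := by
        have h2 : HasDerivAt (fun z : ℂ => -(Complex.I * z)) (-Complex.I) (t : ℂ) := by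
          exact (((hasDerivAt_id (t : ℂ)).const_mul Complex.I).neg).congr_deriv (by simp)
        have h3 := (Complex.hasDerivAt_exp (-(Complex.I * (t : ℂ)))).comp (t : ℂ) h2
        have h4 := h3.const_sub 1
        exact h4.congr_deriv (by ring)
      exact h1.comp_ofReal
    set g : ℝ → ℂ := fun t => 1 - Complex.exp (-(Complex.I * (t : ℂ))) with hg
    have hderiv : deriv (fun t : ℝ => g t ^ (m + 1) * h t)
        = fun t : ℝ => g t ^ m *
            (((m : ℂ) + 1) * (Complex.I * Complex.exp (-(Complex.I * (t : ℂ)))) * h t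
              + g t * deriv h t) := by
      funext t
      have h5 : HasDerivAt (fun t : ℝ => g t ^ (m + 1) * h t)
          ((((m : ℂ) + 1) * g t ^ m * (Complex.I * Complex.exp (-(Complex.I * (t : ℂ))))) * h t
            + g t ^ (m + 1) * deriv h t) t :=
        (powAux m (hG t)).mul (hd t).hasDerivAt
      rw [h5.deriv]; ring
    rw [iteratedDeriv_succ', hderiv]
    have hsm2 : ContDiff ℝ (⊤ : ℕ∞) (fun t : ℝ =>
        ((m : ℂ) + 1) * (Complex.I * Complex.exp (-(Complex.I * (t : ℂ)))) * h t
          + (1 - Complex.exp (-(Complex.I * (t : ℂ)))) * deriv h t) :=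
      (((contDiff_const.mul (contDiff_const.mul hsm))).mul hh).add
        ((contDiff_const.sub hsm).mul hd')
    have := ih (fun t : ℝ =>
        ((m : ℂ) + 1) * (Complex.I * Complex.exp (-(Complex.I * (t : ℂ)))) * h t
          + (1 - Complex.exp (-(Complex.I * (t : ℂ)))) * deriv h t) hsm2
    rw [show (fun t : ℝ => g t ^ m *
        (((m : ℂ) + 1) * (Complex.I * Complex.exp (-(Complex.I * (t : ℂ)))) * h t + g t * deriv h t))
      = (fun t : ℝ => (1 - Complex.exp (-(Complex.I * (t : ℂ)))) ^ m *
        (((m : ℂ) + 1) * (Complex.I * Complex.exp (-(Complex.I * (t : ℂ)))) * h t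
          + (1 - Complex.exp (-(Complex.I * (t : ℂ)))) * deriv h t)) from rfl, this]
    simp only [Complex.ofReal_zero, mul_zero, neg_zero, Complex.exp_zero]
    push_cast [Nat.factorial_succ]
    ring

theorem abs_iteratedDeriv_char_poly (n M : ℕ) (hn : 0 < n) (hM : 0 < M)
    (θ : Fin M → ℝ) :
    ‖iteratedDeriv n (fun t : ℝ =>
        (1 - Complex.exp (-(Complex.I * (t : ℂ)))) ^ n *
        ∏ j : Fin M,
          (1 - Complex.exp (Complex.I * ((θ j : ℂ) - (t : ℂ)))) *
          (1 - Complex.exp (Complex.I * (-(θ j : ℂ) - (t : ℂ))))) 0‖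
      = (n.factorial : ℝ) * 2 ^ M * ∏ j : Fin M, (1 - Real.cos (θ j)) := by
  have hh : ContDiff ℝ (⊤ : ℕ∞) (fun t : ℝ => ∏ j : Fin M,
      (1 - Complex.exp (Complex.I * ((θ j : ℂ) - (t : ℂ)))) *
      (1 - Complex.exp (Complex.I * (-(θ j : ℂ) - (t : ℂ))))) := by
    apply contDiff_prod
    intro j _
    have e1 : (fun t : ℝ => (1 - Complex.exp (Complex.I * ((θ j : ℂ) - (t : ℂ)))) *
        (1 - Complex.exp (Complex.I * (-(θ j : ℂ) - (t : ℂ)))))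
        = (fun t : ℝ => (1 - Complex.exp ((-Complex.I) * (t : ℂ) + Complex.I * (θ j : ℂ))) *
        (1 - Complex.exp ((-Complex.I) * (t : ℂ) + (-(Complex.I * (θ j : ℂ)))))) := by
      funext t
      rw [show Complex.I * ((θ j : ℂ) - (t : ℂ)) = (-Complex.I) * (t : ℂ) + Complex.I * (θ j : ℂ) by ring,
        show Complex.I * (-(θ j : ℂ) - (t : ℂ)) = (-Complex.I) * (t : ℂ) + (-(Complex.I * (θ j : ℂ))) by ring]
    rw [e1]
    exact (contDiff_const.sub (smoothexp_aux _ _)).mul (contDiff_const.sub (smoothexp_aux _ _))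
  rw [key_lemma n _ hh]
  have hprod : (∏ j : Fin M,
      (1 - Complex.exp (Complex.I * ((θ j : ℂ) - ((0 : ℝ) : ℂ)))) *
      (1 - Complex.exp (Complex.I * (-(θ j : ℂ) - ((0 : ℝ) : ℂ)))))
      = ((∏ j : Fin M, (2 - 2 * Real.cos (θ j)) : ℝ) : ℂ) := by
    push_cast
    refine Finset.prod_congr rfl fun j _ => ?_
    rw [Complex.cos]
    rw [show Complex.I * ((θ j : ℂ) - 0) = (θ j : ℂ) * Complex.I by ring,
      show Complex.I * (-(θ j : ℂ) - 0) = -(θ j : ℂ) * Complex.I by ring]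
    have hab : Complex.exp ((θ j : ℂ) * Complex.I) * Complex.exp (-(θ j : ℂ) * Complex.I) = 1 := by
      rw [← Complex.exp_add]; ring_nf; exact Complex.exp_zero
    simp only [neg_mul] at hab ⊢
    field_simp
    linear_combination hab
  rw [hprod]
  rw [norm_mul, norm_mul, norm_pow, Complex.norm_I, Complex.norm_natCast, Complex.norm_real, Real.norm_eq_abs, one_pow, mul_one]
  have hnn : (0 : ℝ) ≤ ∏ j : Fin M, (2 - 2 * Real.cos (θ j)) := by
    apply Finset.prod_nonneg
    intro j _
    nlinarith [Real.cos_le_one (θ j)]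
  rw [_root_.abs_of_nonneg hnn]
  rw [show (∏ j : Fin M, (2 - 2 * Real.cos (θ j))) = ∏ j : Fin M, 2 * (1 - Real.cos (θ j)) by
    refine Finset.prod_congr rfl fun j _ => by ring]
  rw [Finset.prod_mul_distrib, Finset.prod_const, Finset.card_univ, Fintype.card_fin]
  ring
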